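/- Define F : ℝ³ → ℝ by F(θ₁₂, θ₁₃, θ₂₃) = det [[1, cos θ₁₂, cos θ₁₃], [cos θ₁₂, 1, cos θ₂₃], [cos θ₁₃, cos θ₂₃, 1]]. Let ε₁, ε₂, ε₃ ∈ {−1,+1} and suppose ε₁θ₂₃ + ε₂θ₁₃ + ε₃θ₁₂ ∈ 2πℤ. Then at the point (θ₁₂, θ₁₃, θ₂₃): ∂F/∂θ₁₂ = −2ε₁ε₂ sin θ₁₂ sin θ₁₃ sin θ₂₃, ∂F/∂θ₁₃ = −2ε₁ε₃ sin θ₁₂ sin θ₁₃ sin θ₂₃, and ∂F/∂θ₂₃ = −2ε₂ε₃ sin θ₁₂ sin θ₁₃ sin θ₂₃. In particular the gradient of F at such a point equals −2ε₁ε₂ε₃ sin θ₁₂ sin θ₁₃ sin θ₂₃ · (ε₃, ε₂, ε₁), so that the first-order variation of F is proportional to the variation of the deficit angle ω^ε = ε₁θ₂₃ + ε₂θ₁₃ + ε₃θ₂₃. -/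

import Mathlib

lemma gram3_eq (x y z : ℝ) :
    (Matrix.det !![1, Real.cos x, Real.cos y;
                Real.cos x, 1, Real.cos z;
                Real.cos y, Real.cos z, 1])
      = 1 + 2 * Real.cos x * Real.cos y * Real.cos z
          - Real.cos x ^ 2 - Real.cos y ^ 2 - Real.cos z ^ 2 := by
  simp [Matrix.det_fin_three]
  ring

lemma dgram (y z x : ℝ) :
    deriv (fun t => 1 + 2 * Real.cos t * Real.cos y * Real.cos z
          - Real.cos t ^ 2 - Real.cos y ^ 2 - Real.cos z ^ 2) x
      = 2 * Real.sin x * (Real.cos x - Real.cos y * Real.cos z) := by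
  have hc := Real.hasDerivAt_cos x
  have h1 : HasDerivAt (fun t => 2 * Real.cos t * Real.cos y * Real.cos z)
      (2 * (-Real.sin x) * Real.cos y * Real.cos z) x :=
    ((hc.const_mul 2).mul_const (Real.cos y)).mul_const (Real.cos z)
  have h2 : HasDerivAt (fun t => Real.cos t ^ 2) (2 * Real.cos x * (-Real.sin x)) x := by
    simpa [pow_one] using hc.fun_pow 2
  have H := (((((hasDerivAt_const x (1:ℝ)).fun_add h1).fun_sub h2).fun_sub
      (hasDerivAt_const x (Real.cos y ^ 2))).fun_sub (hasDerivAt_const x (Real.cos z ^ 2)))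
  rw [H.deriv]
  ring

lemma key (a b c : ℝ) (n : ℤ) (hsum : a + b + c = 2 * Real.pi * n) :
    Real.cos c = Real.cos a * Real.cos b - Real.sin a * Real.sin b := by
  have hc : c = 2 * Real.pi * n - (a + b) := by linarith
  rw [hc, Real.cos_sub, Real.cos_add, Real.sin_add]
  have c1 : Real.cos (2 * Real.pi * n) = 1 := by
    simpa [mul_comm, mul_assoc] using Real.cos_int_mul_two_pi n
  have s1 : Real.sin (2 * Real.pi * n) = 0 := by
    rw [show (2:ℝ) * Real.pi * n = ((2*n : ℤ) : ℝ) * Real.pi by push_cast; ring,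
      Real.sin_int_mul_pi]
  rw [c1, s1]; ring

lemma sin_pm (ε x : ℝ) (h : ε = 1 ∨ ε = -1) : Real.sin (ε * x) = ε * Real.sin x := by
  rcases h with h | h <;> simp [h]

lemma cos_pm (ε x : ℝ) (h : ε = 1 ∨ ε = -1) : Real.cos (ε * x) = Real.cos x := by
  rcases h with h | h <;> simp [h]


/-- The Gram determinant of three unit vectors with pairwise angles `θ₁₂, θ₁₃, θ₂₃`. -/
noncomputable def gram3 (θ₁₂ θ₁₃ θ₂₃ : ℝ) : ℝ :=
  Matrix.det !![1, Real.cos θ₁₂, Real.cos θ₁₃;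
                Real.cos θ₁₂, 1, Real.cos θ₂₃;
                Real.cos θ₁₃, Real.cos θ₂₃, 1]

/-- Let `F(θ₁₂,θ₁₃,θ₂₃)` be the Gram determinant of three unit vectors with
pairwise angles `θ₁₂, θ₁₃, θ₂₃`. If `ε₁, ε₂, ε₃ ∈ {−1,+1}` and
`ε₁θ₂₃ + ε₂θ₁₃ + ε₃θ₁₂ ∈ 2πℤ`, then at that point
`∂F/∂θ₁₂ = −2ε₁ε₂ sin θ₁₂ sin θ₁₃ sin θ₂₃`, `∂F/∂θ₁₃ = −2ε₁ε₃ sin θ₁₂ sin θ₁₃ sin θ₂₃`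
and `∂F/∂θ₂₃ = −2ε₂ε₃ sin θ₁₂ sin θ₁₃ sin θ₂₃`. -/
theorem stmt_13 (θ₁₂ θ₁₃ θ₂₃ ε₁ ε₂ ε₃ : ℝ)
    (h₁ : ε₁ = 1 ∨ ε₁ = -1) (h₂ : ε₂ = 1 ∨ ε₂ = -1) (h₃ : ε₃ = 1 ∨ ε₃ = -1)
    (h : ∃ n : ℤ, ε₁ * θ₂₃ + ε₂ * θ₁₃ + ε₃ * θ₁₂ = 2 * Real.pi * n) :
    deriv (fun t => gram3 t θ₁₃ θ₂₃) θ₁₂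
        = -2 * ε₁ * ε₂ * Real.sin θ₁₂ * Real.sin θ₁₃ * Real.sin θ₂₃ ∧
    deriv (fun t => gram3 θ₁₂ t θ₂₃) θ₁₃
        = -2 * ε₁ * ε₃ * Real.sin θ₁₂ * Real.sin θ₁₃ * Real.sin θ₂₃ ∧
    deriv (fun t => gram3 θ₁₂ θ₁₃ t) θ₂₃
        = -2 * ε₂ * ε₃ * Real.sin θ₁₂ * Real.sin θ₁₃ * Real.sin θ₂₃ := by
  obtain ⟨n, hn⟩ := h
  have e1 : ε₁ * ε₁ = 1 := by rcases h₁ with h|h <;> simp [h]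
  have e2 : ε₂ * ε₂ = 1 := by rcases h₂ with h|h <;> simp [h]
  have e3 : ε₃ * ε₃ = 1 := by rcases h₃ with h|h <;> simp [h]
  have c12 : Real.cos θ₁₂ = Real.cos θ₂₃ * Real.cos θ₁₃ - ε₁ * ε₂ * (Real.sin θ₂₃ * Real.sin θ₁₃) := by
    have := key (ε₁ * θ₂₃) (ε₂ * θ₁₃) (ε₃ * θ₁₂) n hn
    rw [cos_pm _ _ h₃, cos_pm _ _ h₁, cos_pm _ _ h₂, sin_pm _ _ h₁, sin_pm _ _ h₂] at this
    rw [this]; ring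
  have c13 : Real.cos θ₁₃ = Real.cos θ₂₃ * Real.cos θ₁₂ - ε₁ * ε₃ * (Real.sin θ₂₃ * Real.sin θ₁₂) := by
    have hn' : ε₁ * θ₂₃ + ε₃ * θ₁₂ + ε₂ * θ₁₃ = 2 * Real.pi * n := by linarith
    have := key (ε₁ * θ₂₃) (ε₃ * θ₁₂) (ε₂ * θ₁₃) n hn'
    rw [cos_pm _ _ h₂, cos_pm _ _ h₁, cos_pm _ _ h₃, sin_pm _ _ h₁, sin_pm _ _ h₃] at this
    rw [this]; ring
  have c23 : Real.cos θ₂₃ = Real.cos θ₁₂ * Real.cos θ₁₃ - ε₂ * ε₃ * (Real.sin θ₁₂ * Real.sin θ₁₃) := by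
    have hn' : ε₂ * θ₁₃ + ε₃ * θ₁₂ + ε₁ * θ₂₃ = 2 * Real.pi * n := by linarith
    have := key (ε₂ * θ₁₃) (ε₃ * θ₁₂) (ε₁ * θ₂₃) n hn'
    rw [cos_pm _ _ h₁, cos_pm _ _ h₂, cos_pm _ _ h₃, sin_pm _ _ h₂, sin_pm _ _ h₃] at this
    rw [this]; ring
  refine ⟨?_, ?_, ?_⟩
  · have : (fun t => gram3 t θ₁₃ θ₂₃) = (fun t => 1 + 2 * Real.cos t * Real.cos θ₁₃ * Real.cos θ₂₃
        - Real.cos t ^ 2 - Real.cos θ₁₃ ^ 2 - Real.cos θ₂₃ ^ 2) := by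
      funext t; rw [gram3, gram3_eq]
    rw [this, dgram, c12]; ring
  · have : (fun t => gram3 θ₁₂ t θ₂₃) = (fun t => 1 + 2 * Real.cos t * Real.cos θ₁₂ * Real.cos θ₂₃
        - Real.cos t ^ 2 - Real.cos θ₁₂ ^ 2 - Real.cos θ₂₃ ^ 2) := by
      funext t; rw [gram3, gram3_eq]; ring
    rw [this, dgram, c13]; ring
  · have : (fun t => gram3 θ₁₂ θ₁₃ t) = (fun t => 1 + 2 * Real.cos t * Real.cos θ₁₂ * Real.cos θ₁₃
        - Real.cos t ^ 2 - Real.cos θ₁₂ ^ 2 - Real.cos θ₁₃ ^ 2) := by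
      funext t; rw [gram3, gram3_eq]; ring
    rw [this, dgram, c23]; ring
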